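/- Fix d ≥ 1 and ρ > 0. (i) If θ : [0,1] → ℝ^d satisfies sup_{t∈[0,1]} |θ(t)| ≤ (Σ_{i=1}^d ρ^{−2i})^{−1/2}, then θ ∈ S(ρ). (ii) If θ ∈ S(ρ), then sup_{t∈[0,1]} |θ(t)| ≤ (1+ρ)^d − 1. Here |·| is the Euclidean norm on ℝ^d. -/

import Mathlib

open MeasureTheory ProbabilityTheory Finset
open scoped ENNReal NNReal Real

noncomputable section

/-- Euclidean norm on `Fin d → ℝ`. -/
def vnorm {d : ℕ} (x : Fin d → ℝ) : ℝ := Real.sqrt (∑ i, x i ^ 2)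

/-- Operator norm (induced by the Euclidean norms) of a real matrix. -/
def opNorm {d e : ℕ} (A : Matrix (Fin d) (Fin e) ℝ) : ℝ :=
  sSup {r : ℝ | ∃ x : Fin e → ℝ, vnorm x ≤ 1 ∧ r = vnorm (A.mulVec x)}

/-- Backwards matrix product `A k * A (k-1) * ⋯ * A (j+1)` (identity if `k ≤ j`). -/
def matProdDown {d : ℕ} (A : ℕ → Matrix (Fin d) (Fin d) ℝ) (j : ℕ) :
    ℕ → Matrix (Fin d) (Fin d) ℝ
  | 0 => 1
  | (k+1) => if k + 1 ≤ j then 1 else A (k+1) * matProdDown A j k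

/-- The stability class `S(ρ)`: the local autoregressive polynomial
`θ(z;t) = 1 - ∑_{j=1}^d θ_j(t) z^j` has no zero in the open disk of radius `ρ⁻¹`,
for every `t ∈ [0,1]`. -/
def srho (d : ℕ) (ρ : ℝ) : Set (ℝ → Fin d → ℝ) :=
  {θ | ∀ t ∈ Set.Icc (0:ℝ) 1, ∀ z : ℂ, ‖z‖ < ρ⁻¹ →
        (1 : ℂ) - ∑ j : Fin d, (θ t j : ℂ) * z ^ ((j : ℕ) + 1) ≠ 0}

/-- The `β`-Lipschitz (Hölder) ball `Λ_d(β, L)` (on `[0,1]`), vector-valued version.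
Writing `β = k + α` with `k ∈ ℕ` and `α ∈ (0,1]` (so `k = ⌈β⌉ - 1`), the `k`-th derivative
is `α`-Hölder with constant `L` and the function is bounded by `L` on `[0,1]`. -/
def holderVec (d : ℕ) (β L : ℝ) : Set (ℝ → Fin d → ℝ) :=
  {f | (∀ i < ⌈β⌉₊ - 1, Differentiable ℝ (iteratedDeriv i f)) ∧
       (∀ s ∈ Set.Icc (0:ℝ) 1, ∀ t ∈ Set.Icc (0:ℝ) 1,
          vnorm (iteratedDeriv (⌈β⌉₊ - 1) f t - iteratedDeriv (⌈β⌉₊ - 1) f s)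
            ≤ L * |t - s| ^ (β - ((⌈β⌉₊ - 1 : ℕ) : ℝ))) ∧
       (∀ t ∈ Set.Icc (0:ℝ) 1, vnorm (f t) ≤ L)}

/-- The `β`-Lipschitz (Hölder) ball `Λ₁(β, L)` (on `[0,1]`), scalar version. -/
def holderR (β L : ℝ) : Set (ℝ → ℝ) :=
  {f | (∀ i < ⌈β⌉₊ - 1, Differentiable ℝ (iteratedDeriv i f)) ∧
       (∀ s ∈ Set.Icc (0:ℝ) 1, ∀ t ∈ Set.Icc (0:ℝ) 1,
          |iteratedDeriv (⌈β⌉₊ - 1) f t - iteratedDeriv (⌈β⌉₊ - 1) f s|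
            ≤ L * |t - s| ^ (β - ((⌈β⌉₊ - 1 : ℕ) : ℝ))) ∧
       (∀ t ∈ Set.Icc (0:ℝ) 1, |f t| ≤ L)}

/-- The smoothness class `C(β, L, ρ, σ₋, σ₊)`. -/
def Cclass (d : ℕ) (β L ρ σlo σhi : ℝ) : Set ((ℝ → Fin d → ℝ) × (ℝ → ℝ)) :=
  {P | P.1 ∈ holderVec d β L ∧ P.1 ∈ srho d ρ ∧
       ∀ t ∈ Set.Icc (0:ℝ) 1, P.2 t ∈ Set.Icc σlo σhi}

/-- The smoothness class `C*(β, L, ρ, σ₋, σ₊)`, where moreover `σ ∈ Λ₁(β, σ₊)`. -/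
def CclassStar (d : ℕ) (β L ρ σlo σhi : ℝ) : Set ((ℝ → Fin d → ℝ) × (ℝ → ℝ)) :=
  {P | P ∈ Cclass d β L ρ σlo σhi ∧ P.2 ∈ holderR β σhi}

/-- The data of a TVAR triangular array: innovations `ε n k` (`1 ≤ k ≤ n`) and
initial vectors `X0 n = X_{0,n}` on a probability space `Ω`. -/
structure TVAR (d : ℕ) (Ω : Type) [MeasureSpace Ω] where
  ε : ℕ → ℕ → Ω → ℝ
  X0 : ℕ → Ω → Fin d → ℝ

namespace TVAR

variable {d : ℕ} {Ω : Type} [MeasureSpace Ω]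

/-- The TVAR state vector process `X_{k,n} = (X_{k,n}, …, X_{k-d+1,n})` driven by the
parameters `(θ, σ)`:
`X_{k,n} = ∑_{i=1}^d θ_i((k-1)/n) X_{k-i,n} + σ(k/n) ε_{k,n}`. -/
def Xvec (M : TVAR d Ω) (θ : ℝ → Fin d → ℝ) (σ : ℝ → ℝ) (n : ℕ) : ℕ → Ω → Fin d → ℝ
  | 0 => M.X0 n
  | (k+1) => fun ω i =>
      if (i : ℕ) = 0 then
        (∑ j, θ ((k : ℝ) / n) j * M.Xvec θ σ n k ω j)
          + σ (((k : ℝ) + 1) / n) * M.ε n (k+1) ω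
      else M.Xvec θ σ n k ω ⟨(i : ℕ) - 1, lt_of_le_of_lt (Nat.sub_le _ _) i.isLt⟩

/-- The scalar observation `X_{k,n}`. -/
def Xs (M : TVAR d Ω) [NeZero d] (θ : ℝ → Fin d → ℝ) (σ : ℝ → ℝ) (n k : ℕ) (ω : Ω) : ℝ :=
  M.Xvec θ σ n k ω ⟨0, Nat.pos_of_ne_zero (NeZero.ne d)⟩

end TVAR

/-- Assumption (A1) with moment order `q`: for each `n` the innovations `{ε_{k,n}}_{1≤k≤n}`
are independent, centered with unit variance, independent of the initial condition `X_{0,n}`,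
and the `q`-th moments of `X_{0,n}` and of the innovations are uniformly bounded. -/
def A1 {d : ℕ} {Ω : Type} [MeasureSpace Ω] (M : TVAR d Ω) (q : ℝ) : Prop :=
  IsProbabilityMeasure (ℙ : Measure Ω) ∧
  (∀ n k, Measurable (M.ε n k)) ∧
  (∀ n, Measurable (M.X0 n)) ∧
  (∀ n : ℕ, 1 ≤ n →
    iIndepFun
      (fun (k : Fin n) ω => M.ε n ((k : ℕ) + 1) ω) ℙ) ∧
  (∀ n : ℕ, 1 ≤ n → IndepFun (M.X0 n) (fun ω (k : Fin n) => M.ε n ((k : ℕ) + 1) ω) ℙ) ∧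
  (∀ n k : ℕ, 1 ≤ k → k ≤ n → Integrable (M.ε n k) ℙ ∧ ∫ ω, M.ε n k ω ∂ℙ = 0) ∧
  (∀ n k : ℕ, 1 ≤ k → k ≤ n →
    Integrable (fun ω => (M.ε n k ω) ^ 2) ℙ ∧ ∫ ω, (M.ε n k ω) ^ 2 ∂ℙ = 1) ∧
  (∃ K : ℝ, ∀ n : ℕ, 1 ≤ n →
    (∫⁻ ω, ENNReal.ofReal (vnorm (M.X0 n ω) ^ q) ∂ℙ) ≤ ENNReal.ofReal K) ∧
  (∃ K : ℝ, ∀ n k : ℕ, 1 ≤ k → k ≤ n →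
    (∫⁻ ω, ENNReal.ofReal (|M.ε n k ω| ^ q) ∂ℙ) ≤ ENNReal.ofReal K)

/-- Assumption (A2): each innovation `ε_{k,n}` has an absolutely continuous density
`p_{k,n}` (with a.e. derivative `ṗ_{k,n}`) w.r.t. Lebesgue measure, with
`E[ṗ/p(ε)] = 0` and `sup E[(ṗ/p(ε))²] < ∞`. -/
def A2 {d : ℕ} {Ω : Type} [MeasureSpace Ω] (M : TVAR d Ω) : Prop :=
  ∃ pdf dpdf : ℕ → ℕ → ℝ → ℝ, ∃ Iε : ℝ,
    ∀ n k : ℕ, 1 ≤ k → k ≤ n →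
      (∀ x, 0 ≤ pdf n k x) ∧ Measurable (pdf n k) ∧
      (Measure.map (M.ε n k) ℙ
        = (volume : Measure ℝ).withDensity (fun x => ENNReal.ofReal (pdf n k x))) ∧
      (∀ x y : ℝ, pdf n k y - pdf n k x = ∫ u in x..y, dpdf n k u) ∧
      (∫ ω, dpdf n k (M.ε n k ω) / pdf n k (M.ε n k ω) ∂ℙ = 0) ∧
      (∫ ω, (dpdf n k (M.ε n k ω) / pdf n k (M.ε n k ω)) ^ 2 ∂ℙ ≤ Iε)

namespace TVAR

variable {d : ℕ} {Ω : Type} [MeasureSpace Ω]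

/-- The NLMS recursive estimator `θ̂_{k,n}(μ)`. -/
def nlms (M : TVAR d Ω) [NeZero d] (θ : ℝ → Fin d → ℝ) (σ : ℝ → ℝ) (μ : ℝ) (n : ℕ) :
    ℕ → Ω → Fin d → ℝ
  | 0 => fun _ _ => 0
  | (k+1) => fun ω i =>
      M.nlms θ σ μ n k ω i +
        μ * (M.Xs θ σ n (k+1) ω - ∑ j, M.nlms θ σ μ n k ω j * M.Xvec θ σ n k ω j)
          * M.Xvec θ σ n k ω i / (1 + μ * vnorm (M.Xvec θ σ n k ω) ^ 2)

/-- The pointwise NLMS estimator `θ̂_n(t; μ) = θ̂_{⌊tn⌋,n}(μ)`. -/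
def est (M : TVAR d Ω) [NeZero d] (θ : ℝ → Fin d → ℝ) (σ : ℝ → ℝ) (μ : ℝ) (n : ℕ)
    (t : ℝ) : Ω → Fin d → ℝ :=
  M.nlms θ σ μ n ⌊t * n⌋₊

/-- The bias-reduced (two step-sizes) estimator `θ̃_n(t; μ, γ)`. -/
def estR (M : TVAR d Ω) [NeZero d] (θ : ℝ → Fin d → ℝ) (σ : ℝ → ℝ) (μ γ : ℝ) (n : ℕ)
    (t : ℝ) (ω : Ω) : Fin d → ℝ :=
  fun i => (1 - γ)⁻¹ * (M.est θ σ μ n t ω i - γ * M.est θ σ (γ * μ) n t ω i)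

/-- The σ-algebra `F_{k,n} = σ(X_{0,n}, X_{1,n}, …, X_{k,n})`. -/
def filt (M : TVAR d Ω) [NeZero d] (θ : ℝ → Fin d → ℝ) (σ : ℝ → ℝ) (n k : ℕ) :
    MeasurableSpace Ω :=
  MeasurableSpace.comap (M.X0 n) inferInstance ⊔
    ⨆ j ∈ Set.Icc 1 k, MeasurableSpace.comap (M.Xs θ σ n j) inferInstance

end TVAR

/-- `L^p` norm (w.r.t. the Euclidean norm) of a vector–valued random variable. -/
def pnormVec {d : ℕ} {Ω : Type} [MeasureSpace Ω] (p : ℝ) (Z : Ω → Fin d → ℝ) : ℝ :=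
  (∫ ω, vnorm (Z ω) ^ p ∂ℙ) ^ (1 / p)

/-- `L^p` norm (w.r.t. the operator norm) of a matrix–valued random variable. -/
def pnormMat {d : ℕ} {Ω : Type} [MeasureSpace Ω] (p : ℝ)
    (Z : Ω → Matrix (Fin d) (Fin d) ℝ) : ℝ :=
  (∫ ω, opNorm (Z ω) ^ p ∂ℙ) ^ (1 / p)

/-- `L^p` norm of a real random variable. -/
def pnormR {Ω : Type} [MeasureSpace Ω] (p : ℝ) (Z : Ω → ℝ) : ℝ :=
  (∫ ω, |Z ω| ^ p ∂ℙ) ^ (1 / p)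

/-- Entrywise expectation of a random matrix. -/
def expMat {d : ℕ} {Ω : Type} [MeasureSpace Ω] (Z : Ω → Matrix (Fin d) (Fin d) ℝ) :
    Matrix (Fin d) (Fin d) ℝ :=
  Matrix.of fun i j => ∫ ω, Z ω i j ∂ℙ

/-- `F_μ(x) = x xᵀ / (1 + μ |x|²)`. -/
def Fmu {d : ℕ} (μ : ℝ) (x : Fin d → ℝ) : Matrix (Fin d) (Fin d) ℝ :=
  Matrix.of fun i j => x i * x j / (1 + μ * vnorm x ^ 2)

/-- `L_μ(x) = x / (1 + μ |x|²)`. -/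
def Lmu {d : ℕ} (μ : ℝ) (x : Fin d → ℝ) : Fin d → ℝ :=
  fun i => x i / (1 + μ * vnorm x ^ 2)

namespace TVAR

variable {d : ℕ} {Ω : Type} [MeasureSpace Ω]

/-- The random matrix product `Ψ_n(k, j; μ) = ∏_{l=j+1}^{k} (I - μ F_μ(X_{l,n}))`. -/
def Psi (M : TVAR d Ω) (θ : ℝ → Fin d → ℝ) (σ : ℝ → ℝ) (μ : ℝ) (n k j : ℕ) (ω : Ω) :
    Matrix (Fin d) (Fin d) ℝ :=
  matProdDown (fun l => 1 - μ • Fmu μ (M.Xvec θ σ n l ω)) j k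

end TVAR

/-- The local covariance matrix `Σ(t, θ, σ)`, with entries
`∫_{-π}^{π} e^{iλ(k-l)} f(λ; t, θ, σ) dλ` where `f` is the local spectral density
`f(λ; t, θ, σ) = σ²(t)/(2π) |θ(e^{iλ}; t)|^{-2}` (the integral is real since `f` is even). -/
def locCov (d : ℕ) (θ : ℝ → Fin d → ℝ) (σ : ℝ → ℝ) (t : ℝ) : Matrix (Fin d) (Fin d) ℝ :=
  Matrix.of fun k l => ∫ lam in (-π)..π,
    Real.cos (lam * (((k : ℕ) : ℝ) - ((l : ℕ) : ℝ))) *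
      (σ t ^ 2 / (2 * π) *
        ((‖(1 : ℂ) - ∑ j : Fin d,
          (θ t j : ℂ) * Complex.exp (Complex.I * (((j : ℕ) : ℝ) + 1) * lam)‖) ^ 2)⁻¹)

/-- The `α`-fractional power of a symmetric (positive-definite) matrix, through its
spectral decomposition (junk value `0` if the matrix is not Hermitian). -/
def matFracPow {d : ℕ} (A : Matrix (Fin d) (Fin d) ℝ) (α : ℝ) : Matrix (Fin d) (Fin d) ℝ :=
  if h : A.IsHermitian then h.cfc (fun x => x ^ α) else 0

/-- The smallest eigenvalue of a symmetric matrix (as the infimum of the Rayleigh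
quotient over the Euclidean unit sphere). -/
def lamMin {d : ℕ} (A : Matrix (Fin d) (Fin d) ℝ) : ℝ :=
  sInf {r : ℝ | ∃ x : Fin d → ℝ, vnorm x = 1 ∧ r = dotProduct x (A.mulVec x)}

/-- The weighted Lipschitz bound defining `Li(ℝ^d, m, ℝ; p)`: `φ` satisfies both (23) and
(24) with constant `lam`. -/
def LiBound {d m : ℕ} (p : ℝ) (φ : (Fin m → (Fin d → ℝ)) → ℝ) (lam : ℝ) : Prop :=
  (∀ x y : Fin m → Fin d → ℝ,
      |φ x - φ y| ≤ lam * (∑ i, vnorm (x i - y i)) *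
        (1 + ∑ i, vnorm (x i) ^ p + ∑ i, vnorm (y i) ^ p)) ∧
  (∀ x : Fin m → Fin d → ℝ, |φ x| ≤ lam * (1 + ∑ i, vnorm (x i) ^ (p + 1)))

/-- The weighted Lipschitz bound for `m = 1`, i.e. `Li(ℝ^d, 1, ℝ; p)`. -/
def LiBound1 {d : ℕ} (p : ℝ) (φ : (Fin d → ℝ) → ℝ) (lam : ℝ) : Prop :=
  (∀ x y : Fin d → ℝ,
      |φ x - φ y| ≤ lam * vnorm (x - y) * (1 + vnorm x ^ p + vnorm y ^ p)) ∧
  (∀ x : Fin d → ℝ, |φ x| ≤ lam * (1 + vnorm x ^ (p + 1)))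

/-- The `d × d` companion matrix `Θ(t, θ)` of the local autoregressive polynomial. -/
def companion {d : ℕ} (v : Fin d → ℝ) : Matrix (Fin d) (Fin d) ℝ :=
  Matrix.of fun i j => if (i : ℕ) = 0 then v j else if (j : ℕ) + 1 = (i : ℕ) then 1 else 0

/-- The filtration `F_k = σ(Z_0, U_1, …, U_k)` generated by an initial condition and
the first `k` innovations. -/
def natFilt {Ω : Type} [MeasureSpace Ω] {d e : ℕ} (Z0 : Ω → Fin d → ℝ)
    (U : ℕ → Ω → Fin e → ℝ) (k : ℕ) : MeasurableSpace Ω :=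
  MeasurableSpace.comap Z0 inferInstance ⊔
    ⨆ i ∈ Set.Icc 1 k, MeasurableSpace.comap (U i) inferInstance

/-- A vector of `Fin d → ℝ` regarded as a point of Euclidean space. -/
def toEuc {d : ℕ} (x : Fin d → ℝ) : EuclideanSpace ℝ (Fin d) :=
  (WithLp.equiv 2 (Fin d → ℝ)).symm x

/-- The `L^p` norm (`p ∈ [1,∞]`, w.r.t. the Euclidean norm) of a vector-valued random
variable, as an extended nonnegative real. -/
def pnormE {Ω : Type} [MeasureSpace Ω] {d : ℕ} (p : ℝ≥0∞) (Z : Ω → Fin d → ℝ) : ℝ≥0∞ :=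
  eLpNorm (fun ω => toEuc (Z ω)) p ℙ

end
set_option linter.unreachableTactic false
set_option linter.unusedTactic false

open Polynomial

lemma esymm_cons {R : Type*} [CommSemiring R] (a : R) (s : Multiset R) (n : ℕ) :
    (a ::ₘ s).esymm (n+1) = s.esymm (n+1) + a * s.esymm n := by
  simp only [Multiset.esymm, Multiset.powersetCard_cons, Multiset.map_add, Multiset.sum_add,
    Multiset.map_map, Function.comp_def, Multiset.prod_cons]
  rw [Multiset.sum_map_mul_left]

lemma esymm_zero' {R : Type*} [CommSemiring R] (s : Multiset R) : s.esymm 0 = 1 := by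
  simp [Multiset.esymm, Multiset.powersetCard_zero_left]

lemma coeff_prod_one_add (s : Multiset ℂ) (k : ℕ) :
    ((s.map fun b => (1 : ℂ[X]) + C b * X).prod).coeff k = s.esymm k := by
  induction s using Multiset.induction_on generalizing k with
  | empty =>
    cases k with
    | zero => simp [esymm_zero']
    | succ n => simp [Multiset.esymm, Multiset.powersetCard_zero_right, coeff_one]
  | cons a t ih =>
    rw [Multiset.map_cons, Multiset.prod_cons, add_mul, one_mul]
    cases k with
    | zero => simp [esymm_zero', ih]
    | succ n =>
      rw [coeff_add, esymm_cons, ih]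
      rw [mul_assoc, coeff_C_mul, coeff_X_mul, ih]

lemma abs_esymm_le (ρ : ℝ) (hρ : 0 ≤ ρ) (s : Multiset ℂ) (hs : ∀ b ∈ s, ‖b‖ ≤ ρ) (k : ℕ) :
    ‖s.esymm k‖ ≤ (Multiset.card s).choose k * ρ ^ k := by
  induction s using Multiset.induction_on generalizing k with
  | empty =>
    cases k with
    | zero => simp [esymm_zero']
    | succ n => simp [Multiset.esymm, Multiset.powersetCard_zero_right]
  | cons a t ih =>
    have ha : ‖a‖ ≤ ρ := hs a (Multiset.mem_cons_self a t)
    have ht : ∀ b ∈ t, ‖b‖ ≤ ρ := fun b hb => hs b (Multiset.mem_cons_of_mem hb)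
    cases k with
    | zero => simp [esymm_zero']
    | succ n =>
      rw [esymm_cons]
      calc ‖t.esymm (n+1) + a * t.esymm n‖
          ≤ ‖t.esymm (n+1)‖ + ‖a‖ * ‖t.esymm n‖ := by
            refine (norm_add_le _ _).trans ?_
            rw [norm_mul]
        _ ≤ (Multiset.card t).choose (n+1) * ρ ^ (n+1) + ρ * ((Multiset.card t).choose n * ρ ^ n) := by
            gcongr <;> first | exact ih ht _ | exact norm_nonneg _ | exact ha
        _ = ((Multiset.card t).choose (n+1) + (Multiset.card t).choose n) * ρ ^ (n+1) := by ring
        _ = (Multiset.card (a ::ₘ t)).choose (n+1) * ρ ^ (n+1) := by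
            rw [Multiset.card_cons, Nat.choose_succ_succ']
            push_cast; ring

lemma coeff_bound (d : ℕ) (ρ : ℝ) (hρ : 0 < ρ) (θv : Fin d → ℝ)
    (h : ∀ z : ℂ, ‖z‖ < ρ⁻¹ →
      (1 : ℂ) - ∑ j : Fin d, (θv j : ℂ) * z ^ ((j : ℕ) + 1) ≠ 0) (k : Fin d) :
    |θv k| ≤ d.choose ((k:ℕ)+1) * ρ ^ ((k:ℕ)+1) := by
  set P : ℂ[X] := 1 - ∑ j : Fin d, C ((θv j : ℂ)) * X ^ ((j:ℕ)+1) with hP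
  have heval : ∀ z : ℂ, P.eval z = 1 - ∑ j : Fin d, (θv j : ℂ) * z ^ ((j:ℕ)+1) := by
    intro z
    simp [hP, eval_finset_sum]
  have h0 : P.eval 0 = 1 := by
    rw [heval]; simp
  have hPne : P ≠ 0 := fun hc => by simp [hc] at h0
  have hroots : ∀ r ∈ P.roots, ρ⁻¹ ≤ ‖r‖ ∧ r ≠ 0 := by
    intro r hr
    have hr0 : P.eval r = 0 := (Polynomial.mem_roots hPne).1 hr
    constructor
    · by_contra hc
      push_neg at hc
      exact h r hc (by rw [← heval]; exact hr0)
    · rintro rfl; rw [h0] at hr0; exact one_ne_zero hr0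
  set A : Multiset ℂ := P.roots.map (fun r => -r⁻¹) with hA
  set Q : ℂ[X] := (A.map (fun b => 1 + C b * X)).prod with hQdef
  set c : ℂ := P.leadingCoeff * (P.roots.map (fun r => -r)).prod with hc
  have hQ : P = C c * Q := by
    have hfact := (IsAlgClosed.splits P).eq_prod_roots
    have hmap : P.roots.map (fun r => X - C r)
        = P.roots.map (fun r => C (-r) * (1 + C (-r⁻¹) * X)) := by
      refine Multiset.map_congr rfl (fun r hr => ?_)
      have hrne : r ≠ 0 := (hroots r hr).2
      rw [mul_add, mul_one, ← mul_assoc, ← C_mul, neg_mul_neg, mul_inv_cancel₀ hrne, C_1, one_mul, map_neg]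
      ring
    rw [hfact, hmap, Multiset.prod_map_mul]
    have h1 : (P.roots.map fun r => C (-r)).prod = C ((P.roots.map (fun r => -r)).prod) := by
      rw [map_multiset_prod (C : ℂ →+* ℂ[X]), Multiset.map_map]
      rfl
    have h2 : (P.roots.map fun r => 1 + C (-r⁻¹) * X) = A.map (fun b => 1 + C b * X) := by
      rw [hA, Multiset.map_map]
      rfl
    rw [h1, h2, hc, C_mul, ← hQdef]
    ring
  have hcoeffQ : ∀ n, Q.coeff n = A.esymm n := fun n => coeff_prod_one_add A n
  have hc1 : c = 1 := by
    have h00 : P.coeff 0 = 1 := by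
      simp [hP, finset_sum_coeff, coeff_X_pow, coeff_one]
    rw [hQ, coeff_C_mul, hcoeffQ, esymm_zero', mul_one] at h00
    exact h00
  have hcoeffP : P.coeff ((k:ℕ)+1) = -(θv k : ℂ) := by
    simp only [hP, coeff_sub, coeff_one, finset_sum_coeff, coeff_C_mul, coeff_X_pow]
    rw [Finset.sum_eq_single k]
    · simp
    · intro j _ hj
      have : ¬((k:ℕ)+1 = (j:ℕ)+1) := by
        simp only [add_left_inj]
        exact fun hc => hj (Fin.ext hc.symm)
      simp [this]
      intro hkj; omega
    · simp
  have hPQcoeff : P.coeff ((k:ℕ)+1) = A.esymm ((k:ℕ)+1) := by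
    rw [hQ, coeff_C_mul, hc1, one_mul, hcoeffQ]
  have hcard : Multiset.card A ≤ d := by
    rw [hA, Multiset.card_map]
    refine (P.card_roots').trans ?_
    rw [hP]
    refine (natDegree_sub_le _ _).trans (max_le (by simp) ?_)
    refine natDegree_sum_le_of_forall_le _ _ (fun j _ => ?_)
    refine (natDegree_C_mul_le _ _).trans ?_
    rw [natDegree_X_pow]
    omega
  have hAbd : ∀ b ∈ A, ‖b‖ ≤ ρ := by
    intro b hb
    rw [hA] at hb
    obtain ⟨r, hr, rfl⟩ := Multiset.mem_map.1 hb
    obtain ⟨hr1, hr2⟩ := hroots r hr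
    rw [norm_neg, norm_inv]
    exact inv_le_of_inv_le₀ hρ hr1
  have : ‖P.coeff ((k:ℕ)+1)‖ ≤ d.choose ((k:ℕ)+1) * ρ ^ ((k:ℕ)+1) := by
    rw [hPQcoeff]
    refine (abs_esymm_le ρ hρ.le A hAbd _).trans ?_
    have h2 : ((Multiset.card A).choose ((k:ℕ)+1) : ℝ) ≤ (d.choose ((k:ℕ)+1) : ℝ) := by
      exact_mod_cast Nat.choose_le_choose ((k:ℕ)+1) hcard
    exact mul_le_mul_of_nonneg_right h2 (pow_nonneg hρ.le _)
  rwa [hcoeffP, norm_neg, Complex.norm_real, Real.norm_eq_abs] at this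

lemma vnorm_le_sum_abs {d : ℕ} (x : Fin d → ℝ) : vnorm x ≤ ∑ i, |x i| := by
  rw [vnorm]
  have h1 : ∑ i, x i ^ 2 ≤ (∑ i, |x i|) ^ 2 := by
    have := Finset.sum_sq_le_sq_sum_of_nonneg (s := Finset.univ) (f := fun i => |x i|)
      (fun i _ => abs_nonneg _)
    simpa [sq_abs] using this
  refine (Real.sqrt_le_sqrt h1).trans ?_
  rw [Real.sqrt_sq (Finset.sum_nonneg fun i _ => abs_nonneg _)]

theorem statement0' (d : ℕ) (hd : 1 ≤ d) (ρ : ℝ) (hρ : 0 < ρ) :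
    (∀ θ : ℝ → Fin d → ℝ,
        (∀ t ∈ Set.Icc (0:ℝ) 1,
          vnorm (θ t) ≤ (Real.sqrt (∑ i ∈ Finset.range d, (ρ ^ (2 * (i + 1)))⁻¹))⁻¹) →
        (∀ t ∈ Set.Icc (0:ℝ) 1, ∀ z : ℂ, ‖z‖ < ρ⁻¹ →
          (1 : ℂ) - ∑ j : Fin d, (θ t j : ℂ) * z ^ ((j : ℕ) + 1) ≠ 0)) ∧
    (∀ θ : ℝ → Fin d → ℝ,
        (∀ t ∈ Set.Icc (0:ℝ) 1, ∀ z : ℂ, ‖z‖ < ρ⁻¹ →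
          (1 : ℂ) - ∑ j : Fin d, (θ t j : ℂ) * z ^ ((j : ℕ) + 1) ≠ 0) →
        ∀ t ∈ Set.Icc (0:ℝ) 1, vnorm (θ t) ≤ (1 + ρ) ^ d - 1) := by
  have hne : Nonempty (Fin d) := ⟨⟨0, hd⟩⟩
  constructor
  · intro θ hθ t ht z hz
    set B : ℝ := ∑ i ∈ Finset.range d, (ρ ^ (2 * (i + 1)))⁻¹ with hB
    have hBfin : B = ∑ j : Fin d, ((ρ⁻¹) ^ ((j:ℕ)+1)) ^ 2 := by
      rw [hB, ← Fin.sum_univ_eq_sum_range (fun i => (ρ ^ (2 * (i + 1)))⁻¹)]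
      refine Finset.sum_congr rfl fun j _ => ?_
      rw [← pow_mul, inv_pow, mul_comm 2 ((j:ℕ)+1)]
    have hBpos : 0 < B := by
      rw [hB]
      refine Finset.sum_pos (fun i _ => by positivity) ?_
      exact Finset.nonempty_range_iff.2 (by omega)
    set B' : ℝ := ∑ j : Fin d, (‖z‖ ^ ((j:ℕ)+1)) ^ 2 with hB'
    have hB'B : B' < B := by
      rw [hB', hBfin]
      refine Finset.sum_lt_sum_of_nonempty Finset.univ_nonempty fun j _ => ?_
      have h1 : ‖z‖ ^ ((j:ℕ)+1) < (ρ⁻¹) ^ ((j:ℕ)+1) :=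
        pow_lt_pow_left₀ hz (norm_nonneg z) (by omega)
      have h2 : (0:ℝ) ≤ ‖z‖ ^ ((j:ℕ)+1) := by positivity
      nlinarith
    set S : ℂ := ∑ j : Fin d, (θ t j : ℂ) * z ^ ((j : ℕ) + 1) with hS
    have habs : ‖S‖ < 1 := by
      have h1 : ‖S‖ ≤ ∑ j : Fin d, |θ t j| * ‖z‖ ^ ((j:ℕ)+1) := by
        refine (norm_sum_le _ _).trans ?_
        refine Finset.sum_le_sum fun j _ => ?_
        rw [norm_mul, norm_pow, Complex.norm_real, Real.norm_eq_abs]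
      have h2 : ∑ j : Fin d, |θ t j| * ‖z‖ ^ ((j:ℕ)+1)
          ≤ vnorm (θ t) * Real.sqrt B' := by
        have cs := Finset.sum_mul_sq_le_sq_mul_sq Finset.univ
          (fun j => |θ t j|) (fun j : Fin d => ‖z‖ ^ ((j:ℕ)+1))
        have hnn : (0:ℝ) ≤ ∑ j : Fin d, |θ t j| * ‖z‖ ^ ((j:ℕ)+1) :=
          Finset.sum_nonneg fun j _ => by positivity
        have hmm : (0:ℝ) ≤ (∑ j : Fin d, |θ t j| ^ 2) * B' := by
          have : (0:ℝ) ≤ B' := by rw [hB']; positivity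
          positivity
        have h5 := (Real.le_sqrt hnn hmm).2 (by rw [hB']; exact cs)
        refine h5.trans ?_
        rw [Real.sqrt_mul (Finset.sum_nonneg fun j _ => by positivity)]
        have : ∑ j : Fin d, |θ t j| ^ 2 = ∑ j : Fin d, θ t j ^ 2 := by
          simp [sq_abs]
        rw [this, vnorm]
      have h3 : vnorm (θ t) * Real.sqrt B' ≤ (Real.sqrt B)⁻¹ * Real.sqrt B' :=
        mul_le_mul_of_nonneg_right (hθ t ht) (Real.sqrt_nonneg _)
      have h4 : (Real.sqrt B)⁻¹ * Real.sqrt B' < (Real.sqrt B)⁻¹ * Real.sqrt B := by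
        refine mul_lt_mul_of_pos_left ?_ (by positivity)
        exact Real.sqrt_lt_sqrt (by rw [hB']; positivity) hB'B
      have h5 : (Real.sqrt B)⁻¹ * Real.sqrt B = 1 :=
        inv_mul_cancel₀ (by positivity)
      calc ‖S‖ ≤ _ := h1
        _ ≤ _ := h2
        _ ≤ _ := h3
        _ < _ := h4
        _ = 1 := h5
    intro heq
    rw [sub_eq_zero] at heq
    rw [← heq] at habs
    simp at habs
  · intro θ hθ t ht
    have hb := fun k => coeff_bound d ρ hρ (θ t) (hθ t ht) k
    refine (vnorm_le_sum_abs (θ t)).trans ?_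
    have h1 : ∑ j : Fin d, |θ t j| ≤ ∑ j : Fin d, (d.choose ((j:ℕ)+1) : ℝ) * ρ ^ ((j:ℕ)+1) :=
      Finset.sum_le_sum fun j _ => hb j
    refine h1.trans ?_
    rw [Fin.sum_univ_eq_sum_range (fun k => (d.choose (k+1) : ℝ) * ρ ^ (k+1))]
    have hbin : (1 + ρ) ^ d = ∑ k ∈ Finset.range (d+1), ρ ^ k * (d.choose k : ℝ) := by
      rw [add_comm]
      rw [add_pow]
      refine Finset.sum_congr rfl fun k _ => by ring
    rw [hbin, Finset.sum_range_succ']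
    simp only [pow_zero, Nat.choose_zero_right, Nat.cast_one, one_mul]
    rw [add_sub_cancel_right]
    refine le_of_eq (Finset.sum_congr rfl fun k _ => by ring)


/-- **Lemma 1.** For `ρ > 0`: (i) the sup-norm ball of radius
`(∑_{i=1}^d ρ^{-2i})^{-1/2}` is contained in `S(ρ)`; (ii) `S(ρ)` is contained in the
sup-norm ball of radius `(1+ρ)^d - 1`. -/
theorem statement0 (d : ℕ) (hd : 1 ≤ d) (ρ : ℝ) (hρ : 0 < ρ) :
    (∀ θ : ℝ → Fin d → ℝ,
        (∀ t ∈ Set.Icc (0:ℝ) 1,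
          vnorm (θ t) ≤ (Real.sqrt (∑ i ∈ Finset.range d, (ρ ^ (2 * (i + 1)))⁻¹))⁻¹) →
        θ ∈ srho d ρ) ∧
    (∀ θ : ℝ → Fin d → ℝ, θ ∈ srho d ρ →
        ∀ t ∈ Set.Icc (0:ℝ) 1, vnorm (θ t) ≤ (1 + ρ) ^ d - 1) := by
  obtain ⟨h1, h2⟩ := statement0' d hd ρ hρ
  exact ⟨fun θ hθ => h1 θ hθ, fun θ hθ => h2 θ hθ⟩
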